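/- arXiv:2306.05655 — 4 statements merged into one kernel-verified Lean document; each statement's English description precedes it below -/
import Mathlib

section
/- Lemma 3 (smoothing approximation error): Let d ≥ 1, L ≥ 0, μ > 0, and let f : ℝ^d → ℝ be differentiable and L-smooth. Then for every x ∈ ℝ^d, |f_μ(x) − f(x)| ≤ μ² L d / 2. -/
open MeasureTheory ProbabilityTheory Real
open scoped NNReal ENNReal RealInnerProductSpace

/-! ### One-dimensional Gaussian facts -/

noncomputable def gpdf : ℝ → ℝ≥0 := fun x => (gaussianPDFReal 0 1 x).toNNReal

lemma gpdf_meas : Measurable gpdf := (measurable_gaussianPDFReal 0 1).real_toNNReal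

lemma gaussianReal_eq_withDensity :
    gaussianReal 0 1 = (volume : Measure ℝ).withDensity (fun x => (gpdf x : ℝ≥0∞)) := by
  rw [gaussianReal_of_var_ne_zero _ one_ne_zero]
  rfl

lemma integral_stdgauss (g : ℝ → ℝ) :
    ∫ y, g y ∂(gaussianReal 0 1) = ∫ y, gaussianPDFReal 0 1 y * g y := by
  rw [gaussianReal_eq_withDensity, integral_withDensity_eq_integral_smul gpdf_meas]
  congr 1; ext y
  simp [gpdf, NNReal.smul_def, Real.coe_toNNReal _ (gaussianPDFReal_nonneg 0 1 y)]

lemma integrable_stdgauss (g : ℝ → ℝ) (h : Integrable (fun y => gaussianPDFReal 0 1 y * g y)) :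
    Integrable g (gaussianReal 0 1) := by
  rw [gaussianReal_eq_withDensity, integrable_withDensity_iff_integrable_smul gpdf_meas]
  apply h.congr
  filter_upwards with y
  simp [gpdf, NNReal.smul_def, Real.coe_toNNReal _ (gaussianPDFReal_nonneg 0 1 y)]

lemma pdf_eq (x : ℝ) : gaussianPDFReal 0 1 x = (√(2 * π))⁻¹ * rexp (-(1/2) * x ^ 2) := by
  rw [gaussianPDFReal]
  norm_num [NNReal.coe_one]
  left
  ring_nf

lemma hasDerivAt_exp_neg_sq (x : ℝ) :
    HasDerivAt (fun x : ℝ => -rexp (-(1/2) * x ^ 2)) (x * rexp (-(1/2) * x ^ 2)) x := by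
  have h1 : HasDerivAt (fun x : ℝ => -(1/2) * x ^ 2) (-x) x := by
    simpa using ((hasDerivAt_pow 2 x).const_mul (-(1/2) : ℝ))
  have := (Real.hasDerivAt_exp _).comp x h1
  exact this.neg.congr_deriv (by ring)

lemma integrable_exp_half : Integrable (fun x : ℝ => rexp (-(1/2) * x ^ 2)) :=
  integrable_exp_neg_mul_sq (by norm_num)

lemma integrable_mul_exp_half : Integrable (fun x : ℝ => x * rexp (-(1/2) * x ^ 2)) :=
  integrable_mul_exp_neg_mul_sq (by norm_num)

lemma integrable_sq_mul_exp_half : Integrable (fun x : ℝ => x ^ 2 * rexp (-(1/2) * x ^ 2)) := by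
  have := integrable_rpow_mul_exp_neg_mul_sq (b := 1/2) (by norm_num) (s := 2) (by norm_num)
  apply this.congr
  filter_upwards with x
  rw [show ((2:ℝ) = ((2:ℕ):ℝ)) by norm_num, Real.rpow_natCast]

lemma integral_mul_exp_half : ∫ x : ℝ, x * rexp (-(1/2) * x ^ 2) = 0 :=
  integral_eq_zero_of_hasDerivAt_of_integrable (fun x => hasDerivAt_exp_neg_sq x)
    integrable_mul_exp_half integrable_exp_half.neg

lemma hasDerivAt_mul_exp (x : ℝ) :
    HasDerivAt (fun x : ℝ => -(x * rexp (-(1/2) * x ^ 2)))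
      (x ^ 2 * rexp (-(1/2) * x ^ 2) - rexp (-(1/2) * x ^ 2)) x := by
  have h1 : HasDerivAt (fun x : ℝ => rexp (-(1/2) * x ^ 2)) (-x * rexp (-(1/2) * x ^ 2)) x := by
    have := (hasDerivAt_exp_neg_sq x).neg
    exact (this.congr_deriv (by ring)).congr_of_eventuallyEq
      (Filter.Eventually.of_forall fun y => by simp)
  have := (hasDerivAt_id x).mul h1
  exact this.neg.congr_deriv (by simp only [id]; ring)

lemma integral_sq_mul_exp_half : ∫ x : ℝ, x ^ 2 * rexp (-(1/2) * x ^ 2) = √(2 * π) := by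
  have h0 : ∫ x : ℝ, (x ^ 2 * rexp (-(1/2) * x ^ 2) - rexp (-(1/2) * x ^ 2)) = 0 :=
    integral_eq_zero_of_hasDerivAt_of_integrable (fun x => hasDerivAt_mul_exp x)
      (integrable_sq_mul_exp_half.sub integrable_exp_half) integrable_mul_exp_half.neg
  have h1 := integral_sub integrable_sq_mul_exp_half integrable_exp_half
  rw [h0] at h1
  have h2 : ∫ x : ℝ, rexp (-(1/2) * x ^ 2) = √(2 * π) := by
    rw [integral_gaussian]
    rw [show π / (1/2) = 2 * π by ring]
  linarith [h1, h2]

lemma sqrt_two_pi_pos : (0:ℝ) < √(2 * π) := Real.sqrt_pos.mpr (by positivity)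

lemma integrable_id_gauss : Integrable (fun y : ℝ => y) (gaussianReal 0 1) := by
  apply integrable_stdgauss
  have : (fun y : ℝ => gaussianPDFReal 0 1 y * y)
      = fun y => (√(2 * π))⁻¹ * (y * rexp (-(1/2) * y ^ 2)) := by
    funext y; rw [pdf_eq]; ring
  rw [this]
  exact integrable_mul_exp_half.const_mul _

lemma integrable_sq_gauss : Integrable (fun y : ℝ => y ^ 2) (gaussianReal 0 1) := by
  apply integrable_stdgauss
  have : (fun y : ℝ => gaussianPDFReal 0 1 y * y ^ 2)
      = fun y => (√(2 * π))⁻¹ * (y ^ 2 * rexp (-(1/2) * y ^ 2)) := by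
    funext y; rw [pdf_eq]; ring
  rw [this]
  exact integrable_sq_mul_exp_half.const_mul _

lemma integral_id_gauss : ∫ y : ℝ, y ∂(gaussianReal 0 1) = 0 := by
  rw [integral_stdgauss]
  have : (fun y : ℝ => gaussianPDFReal 0 1 y * y)
      = fun y => (√(2 * π))⁻¹ * (y * rexp (-(1/2) * y ^ 2)) := by
    funext y; rw [pdf_eq]; ring
  rw [this, integral_const_mul, integral_mul_exp_half, mul_zero]

lemma integral_sq_gauss : ∫ y : ℝ, y ^ 2 ∂(gaussianReal 0 1) = 1 := by
  rw [integral_stdgauss]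
  have : (fun y : ℝ => gaussianPDFReal 0 1 y * y ^ 2)
      = fun y => (√(2 * π))⁻¹ * (y ^ 2 * rexp (-(1/2) * y ^ 2)) := by
    funext y; rw [pdf_eq]; ring
  rw [this, integral_const_mul, integral_sq_mul_exp_half,
    inv_mul_cancel₀ (ne_of_gt sqrt_two_pi_pos)]

/-! ### Marginals of the product Gaussian -/

lemma pi_map_eval (d : ℕ) (i : Fin d) :
    (Measure.pi fun _ : Fin d => gaussianReal 0 1).map (Function.eval i) = gaussianReal 0 1 := by
  ext s hs
  rw [Measure.map_apply (measurable_pi_apply i) hs]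
  have : Function.eval i ⁻¹' s
      = Set.pi Set.univ (Function.update (fun _ : Fin d => (Set.univ : Set ℝ)) i s) := by
    rw [Set.eval_preimage]
  rw [this, Measure.pi_pi, Finset.prod_eq_single i]
  · simp
  · intro j _ hj
    simp [Function.update_of_ne hj]
  · simp

lemma integrable_eval_pi {d : ℕ} {i : Fin d} {g : ℝ → ℝ}
    (hg : AEStronglyMeasurable g (gaussianReal 0 1))
    (h : Integrable g (gaussianReal 0 1)) :
    Integrable (fun v : Fin d → ℝ => g (v i)) (Measure.pi fun _ => gaussianReal 0 1) := by
  rw [← pi_map_eval d i] at h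
  exact (integrable_map_measure (by rwa [pi_map_eval]) (measurable_pi_apply i).aemeasurable).mp h

lemma integral_eval_pi {d : ℕ} {i : Fin d} {g : ℝ → ℝ}
    (hg : AEStronglyMeasurable g (gaussianReal 0 1)) :
    ∫ v, g (v i) ∂(Measure.pi fun _ : Fin d => gaussianReal 0 1) = ∫ y, g y ∂(gaussianReal 0 1) := by
  have h := integral_map (μ := Measure.pi fun _ : Fin d => gaussianReal 0 1)
    (φ := Function.eval i) (measurable_pi_apply i).aemeasurable (f := g) (by rwa [pi_map_eval])
  rw [pi_map_eval] at h
  exact h.symm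

/-! ### Taylor bound for L-smooth functions -/

lemma gradient_lipschitz {d : ℕ} {L : ℝ} (hL : 0 ≤ L) {f : EuclideanSpace ℝ (Fin d) → ℝ}
    (hsmooth : ∀ x y, ‖gradient f x - gradient f y‖ ≤ L * ‖x - y‖) :
    Continuous (gradient f) := by
  have : LipschitzWith (Real.toNNReal L) (gradient f) := by
    apply LipschitzWith.of_dist_le_mul
    intro a b
    simpa [dist_eq_norm, Real.coe_toNNReal L hL] using hsmooth a b
  exact this.continuous

lemma inner_gradient_eq {d : ℕ} {f : EuclideanSpace ℝ (Fin d) → ℝ} (hf : Differentiable ℝ f)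
    (y v : EuclideanSpace ℝ (Fin d)) : ⟪gradient f y, v⟫ = fderiv ℝ f y v := by
  rw [(hf y).hasGradientAt.hasFDerivAt.fderiv]
  simp [InnerProductSpace.toDual_apply_apply]

lemma taylor_bound {d : ℕ} {L : ℝ} (hL : 0 ≤ L) {f : EuclideanSpace ℝ (Fin d) → ℝ}
    (hf : Differentiable ℝ f)
    (hsmooth : ∀ x y, ‖gradient f x - gradient f y‖ ≤ L * ‖x - y‖)
    (x y : EuclideanSpace ℝ (Fin d)) :
    |f y - f x - ⟪gradient f x, y - x⟫| ≤ L / 2 * ‖y - x‖ ^ 2 := by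
  set v := y - x with hv
  have key : ∀ t : ℝ, HasDerivAt (fun t : ℝ => f (x + t • v)) ⟪gradient f (x + t • v), v⟫ t := by
    intro t
    have hc : HasDerivAt (fun t : ℝ => x + t • v) v t := by
      simpa using ((hasDerivAt_id t).smul_const v).const_add x
    have h2 := (hf (x + t • v)).hasFDerivAt.comp_hasDerivAt t hc
    rw [inner_gradient_eq hf]
    exact h2
  have hcont : Continuous fun t : ℝ => ⟪gradient f (x + t • v), v⟫ := by
    apply Continuous.inner
    · exact (gradient_lipschitz hL hsmooth).comp (by continuity)
    · exact continuous_const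
  have hFTC : ∫ t in (0:ℝ)..1, ⟪gradient f (x + t • v), v⟫ = f y - f x := by
    rw [intervalIntegral.integral_eq_sub_of_hasDerivAt (fun t _ => key t)
      (hcont.intervalIntegrable 0 1)]
    simp [hv]
  have heq : f y - f x - ⟪gradient f x, v⟫
      = ∫ t in (0:ℝ)..1, (⟪gradient f (x + t • v), v⟫ - ⟪gradient f x, v⟫) := by
    rw [intervalIntegral.integral_sub (hcont.intervalIntegrable 0 1)
      intervalIntegrable_const, hFTC]
    simp
  rw [heq]
  have hbound : ∀ t ∈ Set.uIoc (0:ℝ) 1,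
      ‖⟪gradient f (x + t • v), v⟫ - ⟪gradient f x, v⟫‖ ≤ L * ‖v‖ ^ 2 * t := by
    intro t ht
    rw [Set.uIoc_of_le (by norm_num : (0:ℝ) ≤ 1)] at ht
    have ht0 : 0 ≤ t := le_of_lt ht.1
    rw [← inner_sub_left]
    calc ‖⟪gradient f (x + t • v) - gradient f x, v⟫‖
        ≤ ‖gradient f (x + t • v) - gradient f x‖ * ‖v‖ := by
          rw [Real.norm_eq_abs]; exact abs_real_inner_le_norm _ _
      _ ≤ (L * ‖(x + t • v) - x‖) * ‖v‖ := by
          apply mul_le_mul_of_nonneg_right (hsmooth _ _) (norm_nonneg _)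
      _ = L * ‖v‖ ^ 2 * t := by
          rw [show x + t • v - x = t • v by abel, norm_smul, Real.norm_eq_abs,
            abs_of_nonneg ht0]
          ring
  have hgint : IntervalIntegrable (fun t => L * ‖v‖ ^ 2 * t) volume 0 1 :=
    Continuous.intervalIntegrable (by continuity) 0 1
  have hb := intervalIntegral.norm_integral_le_abs_of_norm_le
    (f := fun t => ⟪gradient f (x + t • v), v⟫ - ⟪gradient f x, v⟫)
    (μ := volume) (ae_restrict_of_forall_mem measurableSet_uIoc hbound) hgint
  have hval : ∫ t in (0:ℝ)..1, L * ‖v‖ ^ 2 * t = L / 2 * ‖v‖ ^ 2 := by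
    rw [intervalIntegral.integral_const_mul, integral_id]
    ring
  rw [Real.norm_eq_abs, hval] at hb
  calc |∫ t in (0:ℝ)..1, (⟪gradient f (x + t • v), v⟫ - ⟪gradient f x, v⟫)|
      ≤ |L / 2 * ‖v‖ ^ 2| := hb
    _ = L / 2 * ‖v‖ ^ 2 := abs_of_nonneg (by positivity)

/-! ### The standard Gaussian on `ℝ^d` -/

/-- The standard Gaussian measure `N(0, I_d)` on `ℝ^d`. -/
noncomputable def stdGaussian (d : ℕ) : Measure (EuclideanSpace ℝ (Fin d)) :=
  (Measure.pi fun _ : Fin d => gaussianReal 0 1).map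
    (MeasurableEquiv.toLp 2 (Fin d → ℝ))

instance stdGaussian_isProbability (d : ℕ) : IsProbabilityMeasure (stdGaussian d) :=
  Measure.isProbabilityMeasure_map (MeasurableEquiv.toLp 2 (Fin d → ℝ)).measurable.aemeasurable

lemma integral_stdGaussian_comp {d : ℕ} (h : EuclideanSpace ℝ (Fin d) → ℝ)
    (hm : AEStronglyMeasurable h (stdGaussian d)) :
    ∫ u, h u ∂stdGaussian d
      = ∫ v, h ((MeasurableEquiv.toLp 2 (Fin d → ℝ)) v)
          ∂(Measure.pi fun _ : Fin d => gaussianReal 0 1) := by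
  rw [_root_.stdGaussian] at hm ⊢
  exact integral_map (MeasurableEquiv.toLp 2 (Fin d → ℝ)).measurable.aemeasurable hm

lemma integrable_stdGaussian_iff {d : ℕ} (h : EuclideanSpace ℝ (Fin d) → ℝ)
    (hm : AEStronglyMeasurable h (stdGaussian d)) :
    Integrable h (stdGaussian d)
      ↔ Integrable (fun v => h ((MeasurableEquiv.toLp 2 (Fin d → ℝ)) v))
          (Measure.pi fun _ : Fin d => gaussianReal 0 1) := by
  rw [_root_.stdGaussian] at hm ⊢
  exact integrable_map_measure hm
    (MeasurableEquiv.toLp 2 (Fin d → ℝ)).measurable.aemeasurable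

lemma inner_comp_eq {d : ℕ} (g : EuclideanSpace ℝ (Fin d)) (v : Fin d → ℝ) :
    ⟪g, (MeasurableEquiv.toLp 2 (Fin d → ℝ)) v⟫ = ∑ i, g i * v i := by
  simp [PiLp.inner_apply, RCLike.inner_apply]
  exact Finset.sum_congr rfl (fun i _ => mul_comm _ _)

lemma normsq_comp_eq {d : ℕ} (v : Fin d → ℝ) :
    ‖(MeasurableEquiv.toLp 2 (Fin d → ℝ)) v‖ ^ 2 = ∑ i, (v i) ^ 2 := by
  rw [EuclideanSpace.norm_eq, Real.sq_sqrt (by positivity)]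
  simp [sq_abs]

lemma integrable_inner_stdGaussian {d : ℕ} (g : EuclideanSpace ℝ (Fin d)) :
    Integrable (fun u => ⟪g, u⟫) (stdGaussian d) := by
  have hm : AEStronglyMeasurable (fun u : EuclideanSpace ℝ (Fin d) => ⟪g, u⟫) (stdGaussian d) := by
    exact (continuous_const.inner continuous_id).aestronglyMeasurable
  rw [integrable_stdGaussian_iff _ hm]
  have : (fun v : Fin d → ℝ => ⟪g, (MeasurableEquiv.toLp 2 (Fin d → ℝ)) v⟫)
      = fun v => ∑ i, g i * v i := by
    funext v; exact inner_comp_eq g v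
  rw [this]
  apply integrable_finset_sum
  intro i _
  exact integrable_eval_pi (g := fun y => g i * y)
    (aestronglyMeasurable_id.const_mul _) (integrable_id_gauss.const_mul _)

lemma integral_inner_stdGaussian {d : ℕ} (g : EuclideanSpace ℝ (Fin d)) :
    ∫ u, ⟪g, u⟫ ∂stdGaussian d = 0 := by
  have hm : AEStronglyMeasurable (fun u : EuclideanSpace ℝ (Fin d) => ⟪g, u⟫) (stdGaussian d) := by
    exact (continuous_const.inner continuous_id).aestronglyMeasurable
  rw [integral_stdGaussian_comp _ hm]
  have : (fun v : Fin d → ℝ => ⟪g, (MeasurableEquiv.toLp 2 (Fin d → ℝ)) v⟫)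
      = fun v => ∑ i, g i * v i := by
    funext v; exact inner_comp_eq g v
  rw [this, integral_finset_sum]
  · apply Finset.sum_eq_zero
    intro i _
    rw [integral_eval_pi (g := fun y => g i * y) (aestronglyMeasurable_id.const_mul _),
      integral_const_mul, integral_id_gauss, mul_zero]
  · intro i _
    exact integrable_eval_pi (g := fun y => g i * y)
      (aestronglyMeasurable_id.const_mul _) (integrable_id_gauss.const_mul _)

lemma integrable_normsq_stdGaussian (d : ℕ) :
    Integrable (fun u => ‖u‖ ^ 2) (stdGaussian d) := by
  have hm : AEStronglyMeasurable (fun u : EuclideanSpace ℝ (Fin d) => ‖u‖ ^ 2) (stdGaussian d) := by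
    exact (continuous_norm.pow 2).aestronglyMeasurable
  rw [integrable_stdGaussian_iff _ hm]
  have : (fun v : Fin d → ℝ => ‖(MeasurableEquiv.toLp 2 (Fin d → ℝ)) v‖ ^ 2)
      = fun v => ∑ i, (v i) ^ 2 := by
    funext v; exact normsq_comp_eq v
  rw [this]
  apply integrable_finset_sum
  intro i _
  exact integrable_eval_pi (g := fun y => y ^ 2)
    ((measurable_id.pow_const 2).aestronglyMeasurable) integrable_sq_gauss

lemma integral_normsq_stdGaussian (d : ℕ) :
    ∫ u, ‖u‖ ^ 2 ∂stdGaussian d = d := by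
  have hm : AEStronglyMeasurable (fun u : EuclideanSpace ℝ (Fin d) => ‖u‖ ^ 2) (stdGaussian d) := by
    exact (continuous_norm.pow 2).aestronglyMeasurable
  rw [integral_stdGaussian_comp _ hm]
  have : (fun v : Fin d → ℝ => ‖(MeasurableEquiv.toLp 2 (Fin d → ℝ)) v‖ ^ 2)
      = fun v => ∑ i, (v i) ^ 2 := by
    funext v; exact normsq_comp_eq v
  rw [this, integral_finset_sum]
  · rw [Finset.sum_congr rfl (fun i _ => integral_eval_pi (g := fun y => y ^ 2)
      ((measurable_id.pow_const 2).aestronglyMeasurable))]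
    simp [integral_sq_gauss]
  · intro i _
    exact integrable_eval_pi (g := fun y => y ^ 2)
      ((measurable_id.pow_const 2).aestronglyMeasurable) integrable_sq_gauss

/-- Lemma 3: the Gaussian smoothing `f_μ` satisfies `|f_μ(x) - f(x)| ≤ μ² L d / 2`. -/
theorem smoothing_approximation_error
    (d : ℕ) (hd : 1 ≤ d) (L μ : ℝ) (hL : 0 ≤ L) (hμ : 0 < μ)
    (f : EuclideanSpace ℝ (Fin d) → ℝ)
    (hf : Differentiable ℝ f)
    (hsmooth : ∀ x y, ‖gradient f x - gradient f y‖ ≤ L * ‖x - y‖)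
    (x : EuclideanSpace ℝ (Fin d)) :
    |(∫ u, f (x + μ • u) ∂stdGaussian d) - f x| ≤ μ ^ 2 * L * (d : ℝ) / 2 := by
  set g0 := gradient f x with hg0
  set T := stdGaussian d with hT
  -- pointwise Taylor bound
  have htay : ∀ u : EuclideanSpace ℝ (Fin d),
      |f (x + μ • u) - f x - μ * ⟪g0, u⟫| ≤ L / 2 * μ ^ 2 * ‖u‖ ^ 2 := by
    intro u
    have := taylor_bound hL hf hsmooth x (x + μ • u)
    rw [add_sub_cancel_left] at this
    rw [real_inner_smul_right] at this
    calc |f (x + μ • u) - f x - μ * ⟪g0, u⟫| ≤ L / 2 * ‖μ • u‖ ^ 2 := this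
      _ = L / 2 * μ ^ 2 * ‖u‖ ^ 2 := by
          rw [norm_smul, Real.norm_eq_abs, abs_of_pos hμ, mul_pow]; ring
  -- integrability of the main integrand
  have hcontf : Continuous fun u : EuclideanSpace ℝ (Fin d) => f (x + μ • u) :=
    hf.continuous.comp (continuous_const.add (continuous_id.const_smul μ))
  have hnormsq := integrable_normsq_stdGaussian d
  have hinner := integrable_inner_stdGaussian (d := d) g0
  have h1 : Integrable (fun u => f (x + μ • u)) T := by
    apply Integrable.mono' ((integrable_const (|f x| + μ * ‖g0‖)).add
      ((hnormsq.const_mul (μ * ‖g0‖ + L / 2 * μ ^ 2))))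
      hcontf.aestronglyMeasurable
    filter_upwards with u
    have h2 := htay u
    have hin : |μ * ⟪g0, u⟫| ≤ μ * ‖g0‖ * ‖u‖ := by
      rw [abs_mul, abs_of_pos hμ]
      have := abs_real_inner_le_norm g0 u
      calc μ * |⟪g0, u⟫| ≤ μ * (‖g0‖ * ‖u‖) := by
            exact mul_le_mul_of_nonneg_left this hμ.le
        _ = μ * ‖g0‖ * ‖u‖ := by ring
    have hu : ‖u‖ ≤ 1 + ‖u‖ ^ 2 := by nlinarith [norm_nonneg u, sq_nonneg (‖u‖ - 1)]
    have hb : |f (x + μ • u)| ≤ |f x| + μ * ‖g0‖ * ‖u‖ + L / 2 * μ ^ 2 * ‖u‖ ^ 2 := by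
      have := abs_sub_abs_le_abs_sub (f (x + μ • u)) (f x + μ * ⟪g0, u⟫)
      have h3 : |f (x + μ • u) - (f x + μ * ⟪g0, u⟫)| ≤ L / 2 * μ ^ 2 * ‖u‖ ^ 2 := by
        rw [show f (x + μ • u) - (f x + μ * ⟪g0, u⟫)
          = f (x + μ • u) - f x - μ * ⟪g0, u⟫ by ring]
        exact h2
      have h4 : |f x + μ * ⟪g0, u⟫| ≤ |f x| + μ * ‖g0‖ * ‖u‖ :=
        (abs_add_le _ _).trans (by linarith [hin])
      linarith
    rw [Real.norm_eq_abs]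
    calc |f (x + μ • u)| ≤ |f x| + μ * ‖g0‖ * ‖u‖ + L / 2 * μ ^ 2 * ‖u‖ ^ 2 := hb
      _ ≤ |f x| + μ * ‖g0‖ * (1 + ‖u‖ ^ 2) + L / 2 * μ ^ 2 * ‖u‖ ^ 2 := by
          have : μ * ‖g0‖ * ‖u‖ ≤ μ * ‖g0‖ * (1 + ‖u‖ ^ 2) :=
            mul_le_mul_of_nonneg_left hu (by positivity)
          linarith
      _ = |f x| + μ * ‖g0‖ + (μ * ‖g0‖ + L / 2 * μ ^ 2) * ‖u‖ ^ 2 := by ring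
  have h2int : Integrable (fun u => μ * ⟪g0, u⟫) T := hinner.const_mul μ
  have h2zero : ∫ u, μ * ⟪g0, u⟫ ∂T = 0 := by
    rw [integral_const_mul, integral_inner_stdGaussian, mul_zero]
  have hdiff : Integrable (fun u => f (x + μ • u) - f x - μ * ⟪g0, u⟫) T :=
    (h1.sub (integrable_const _)).sub h2int
  have key : ∫ u, (f (x + μ • u) - f x - μ * ⟪g0, u⟫) ∂T
      = (∫ u, f (x + μ • u) ∂T) - f x := by
    have hA : Integrable (fun u => f (x + μ • u) - f x) T := h1.sub (integrable_const _)
    rw [integral_sub hA h2int, integral_sub h1 (integrable_const (f x)), h2zero, integral_const]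
    simp
  rw [← key]
  calc |∫ u, (f (x + μ • u) - f x - μ * ⟪g0, u⟫) ∂T|
      ≤ ∫ u, |f (x + μ • u) - f x - μ * ⟪g0, u⟫| ∂T := by
        simpa [Real.norm_eq_abs] using
          norm_integral_le_integral_norm (μ := T) (fun u => f (x + μ • u) - f x - μ * ⟪g0, u⟫)
    _ ≤ ∫ u, L / 2 * μ ^ 2 * ‖u‖ ^ 2 ∂T := by
        apply integral_mono hdiff.abs (hnormsq.const_mul _)
        intro u
        exact htay u
    _ = μ ^ 2 * L * (d : ℝ) / 2 := by
        rw [integral_const_mul, integral_normsq_stdGaussian]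
        ring
end

section
/- Lemma 5 (second moment of the zeroth-order estimator): Let d ≥ 1, L ≥ 0, μ > 0, and let f : ℝ^d → ℝ be differentiable and L-smooth. Then for every x ∈ ℝ^d, E_u[‖g_μ(x; u)‖²] ≤ (μ²/2) L² (d + 6)³ + 2(d + 4) ‖∇f(x)‖², where the expectation is over u ~ N(0, I_d). -/
open MeasureTheory ProbabilityTheory

open MeasureTheory ProbabilityTheory Real Filter
open scoped ENNReal NNReal

namespace ZO


/-- `x^k ≤ k! * exp x` for `x ≥ 0`. -/
lemma pow_le_factorial_mul_exp {x : ℝ} (hx : 0 ≤ x) (k : ℕ) :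
    x ^ k ≤ k.factorial * Real.exp x := by
  have h := Real.sum_le_exp_of_nonneg hx (k+1)
  have h2 : x ^ k / k.factorial ≤ ∑ i ∈ Finset.range (k+1), x ^ i / i.factorial := by
    refine Finset.single_le_sum (f := fun i => x ^ i / i.factorial) ?_ (Finset.self_mem_range_succ k)
    intro i _
    positivity
  have hk : (0:ℝ) < k.factorial := by positivity
  calc x ^ k = (x ^ k / k.factorial) * k.factorial := by field_simp
    _ ≤ Real.exp x * k.factorial := by
        apply mul_le_mul_of_nonneg_right (h2.trans h) hk.le
    _ = k.factorial * Real.exp x := by ring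

/-- pointwise domination of `|x|^k exp(-x²/2)` by a gaussian. -/
lemma abs_pow_mul_exp_le (k : ℕ) (x : ℝ) :
    |x| ^ k * Real.exp (-x^2/2) ≤ ((4:ℝ)^k * k.factorial + 1) * Real.exp (-(1/4) * x^2) := by
  have h1 : |x| ^ k ≤ ((4:ℝ)^k * k.factorial + 1) * Real.exp (x^2/4) := by
    rcases le_or_gt (|x|) 1 with h | h
    · have : |x| ^ k ≤ 1 := pow_le_one₀ (abs_nonneg x) h
      have he : (1:ℝ) ≤ Real.exp (x^2/4) := by
        rw [← Real.exp_zero]; exact Real.exp_le_exp.2 (by positivity)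
      have hf : (0:ℝ) ≤ (4:ℝ)^k * k.factorial := by positivity
      nlinarith [Real.exp_pos (x^2/4)]
    · have h2 : |x| ^ k ≤ |x| ^ (2*k) := by
        apply pow_le_pow_right₀ h.le; omega
      have h3 : |x| ^ (2*k) = (x^2/4)^k * 4^k := by
        rw [pow_mul, sq_abs, ← mul_pow, div_mul_cancel₀ _ (by norm_num : (4:ℝ) ≠ 0)]
      have h4 : (x^2/4)^k ≤ k.factorial * Real.exp (x^2/4) :=
        pow_le_factorial_mul_exp (by positivity) k
      have he : (0:ℝ) < Real.exp (x^2/4) := Real.exp_pos _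
      nlinarith [pow_pos (by norm_num : (0:ℝ) < 4) k]
  calc |x| ^ k * Real.exp (-x^2/2)
      ≤ (((4:ℝ)^k * k.factorial + 1) * Real.exp (x^2/4)) * Real.exp (-x^2/2) := by
        apply mul_le_mul_of_nonneg_right h1 (Real.exp_pos _).le
    _ = ((4:ℝ)^k * k.factorial + 1) * Real.exp (-(1/4) * x^2) := by
        rw [mul_assoc, ← Real.exp_add]; ring_nf

/-- Integrability of `x^k exp(-x²/2)`. -/
lemma integrable_pow_mul_exp (k : ℕ) :
    Integrable (fun x : ℝ => x ^ k * Real.exp (-x^2/2)) := by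
  have hg : Integrable (fun x : ℝ => ((4:ℝ)^k * k.factorial + 1) * Real.exp (-(1/4) * x^2)) :=
    (integrable_exp_neg_mul_sq (by norm_num : (0:ℝ) < 1/4)).const_mul _
  refine hg.mono' ?_ ?_
  · exact (continuous_pow k |>.mul (by continuity)).aestronglyMeasurable
  · refine Filter.Eventually.of_forall (fun x => ?_)
    have : ‖x ^ k * Real.exp (-x^2/2)‖ = |x|^k * Real.exp (-x^2/2) := by
      rw [norm_mul, norm_pow, Real.norm_eq_abs, Real.norm_eq_abs,
        abs_of_pos (Real.exp_pos _)]
    rw [this]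
    exact abs_pow_mul_exp_le k x

/-- The raw integrals `I k = ∫ x^k exp(-x²/2)`. -/
noncomputable def I (k : ℕ) : ℝ := ∫ x : ℝ, x ^ k * Real.exp (-x^2/2)

lemma I_zero : I 0 = Real.sqrt (2 * π) := by
  have := integral_gaussian (1/2 : ℝ)
  simp only [I, pow_zero, one_mul]
  have heq : (fun x : ℝ => Real.exp (-x^2/2)) = fun x : ℝ => Real.exp (-(1/2) * x^2) := by
    funext x; ring_nf
  rw [heq, this]
  rw [show π / (1/2 : ℝ) = 2 * π by ring]

lemma I_rec (k : ℕ) : I (k + 2) = (k + 1) * I k := by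
  have hderiv : ∀ x : ℝ, HasDerivAt (fun x : ℝ => x ^ (k+1) * Real.exp (-x^2/2))
      ((k+1) * x ^ k * Real.exp (-x^2/2) - x ^ (k+2) * Real.exp (-x^2/2)) x := by
    intro x
    have h1 : HasDerivAt (fun x : ℝ => x ^ (k+1)) ((k+1) * x ^ k) x := by
      simpa using hasDerivAt_pow (k+1) x
    have h2 : HasDerivAt (fun x : ℝ => Real.exp (-x^2/2)) (Real.exp (-x^2/2) * (-x)) x := by
      have hx : HasDerivAt (fun x : ℝ => -x^2/2) (-x) x := by
        have := (hasDerivAt_pow 2 x).neg.div_const 2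
        exact this.congr_deriv (by push_cast; ring)
      exact hx.exp
    have := h1.mul h2
    exact this.congr_deriv (by ring)
  have hik : Integrable (fun x : ℝ => (k+1 : ℝ) * x ^ k * Real.exp (-x^2/2)) := by
    have := (integrable_pow_mul_exp k).const_mul ((k:ℝ)+1)
    simpa [mul_assoc] using this
  have h0 : ∫ x : ℝ, ((k+1 : ℝ) * x ^ k * Real.exp (-x^2/2) - x ^ (k+2) * Real.exp (-x^2/2)) = 0 := by
    apply integral_eq_zero_of_hasDerivAt_of_integrable hderiv
    · exact hik.sub (integrable_pow_mul_exp (k+2))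
    · exact integrable_pow_mul_exp (k+1)
  have hsplit : ∫ x : ℝ, ((k+1 : ℝ) * x ^ k * Real.exp (-x^2/2) - x ^ (k+2) * Real.exp (-x^2/2))
      = (k+1) * I k - I (k+2) := by
    rw [integral_sub hik (integrable_pow_mul_exp (k+2))]
    congr 1
    rw [I, ← integral_const_mul]
    congr 1
    funext x; ring
  rw [hsplit] at h0
  linarith

lemma I_one : I 1 = 0 := by
  have hderiv : ∀ x : ℝ, HasDerivAt (fun x : ℝ => -Real.exp (-x^2/2))
      (x * Real.exp (-x^2/2)) x := by
    intro x
    have hx : HasDerivAt (fun x : ℝ => -x^2/2) (-x) x := by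
      have := (hasDerivAt_pow 2 x).neg.div_const 2
      exact this.congr_deriv (by push_cast; ring)
    have := hx.exp.neg
    exact this.congr_deriv (by ring)
  have h0 : ∫ x : ℝ, x * Real.exp (-x^2/2) = 0 := by
    apply integral_eq_zero_of_hasDerivAt_of_integrable hderiv
    · simpa using (integrable_pow_mul_exp 1)
    · exact ((integrable_pow_mul_exp 0).congr (Filter.Eventually.of_forall fun x => by simp)).neg
  simpa [I] using h0



noncomputable def pdf1 (x : ℝ) : ℝ := (Real.sqrt (2*π))⁻¹ * Real.exp (-x^2/2)

lemma pdf1_nonneg (x : ℝ) : 0 ≤ pdf1 x := by unfold pdf1; positivity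

lemma pdf1_meas : Measurable (fun x => Real.toNNReal (pdf1 x)) := by
  apply Measurable.real_toNNReal
  unfold pdf1
  fun_prop

lemma gaussianReal_std :
    gaussianReal 0 1 = volume.withDensity (fun x => ((Real.toNNReal (pdf1 x) : ℝ≥0) : ℝ≥0∞)) := by
  rw [gaussianReal_of_var_ne_zero _ one_ne_zero]
  congr 1
  funext x
  rw [gaussianPDF]
  rw [show ENNReal.ofReal (gaussianPDFReal 0 1 x) = ((Real.toNNReal (gaussianPDFReal 0 1 x) : ℝ≥0) : ℝ≥0∞) from rfl]
  congr 1
  unfold gaussianPDFReal pdf1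
  norm_num

lemma integral_gaussianReal_eq (g : ℝ → ℝ) :
    ∫ x, g x ∂(gaussianReal 0 1) = ∫ x, pdf1 x * g x := by
  rw [gaussianReal_std, integral_withDensity_eq_integral_smul pdf1_meas]
  congr 1
  funext x
  rw [NNReal.smul_def, smul_eq_mul, Real.coe_toNNReal _ (pdf1_nonneg x)]

lemma integrable_gaussianReal_iff (g : ℝ → ℝ) :
    Integrable g (gaussianReal 0 1) ↔ Integrable (fun x => pdf1 x * g x) := by
  rw [gaussianReal_std, integrable_withDensity_iff_integrable_smul pdf1_meas]
  constructor <;> intro h <;> refine h.congr (Filter.Eventually.of_forall fun x => ?_) <;>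
    simp only [NNReal.smul_def, smul_eq_mul, Real.coe_toNNReal _ (pdf1_nonneg x)]


-- real content to test:
lemma integrable_pow_gauss (k : ℕ) : Integrable (fun x : ℝ => x ^ k) (gaussianReal 0 1) := by
  rw [integrable_gaussianReal_iff]
  have := (integrable_pow_mul_exp k).const_mul ((Real.sqrt (2*π))⁻¹)
  refine this.congr (Filter.Eventually.of_forall fun x => ?_)
  unfold pdf1; ring

lemma moment_eq (k : ℕ) : ∫ x, x ^ k ∂(gaussianReal 0 1) = (Real.sqrt (2*π))⁻¹ * I k := by
  rw [integral_gaussianReal_eq, I, ← integral_const_mul]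
  congr 1; funext x; unfold pdf1; ring

lemma sqrt_two_pi_pos : (0:ℝ) < Real.sqrt (2*π) := Real.sqrt_pos.2 (by positivity)

lemma m0 : ∫ x, x ^ 0 ∂(gaussianReal 0 1) = 1 := by
  rw [moment_eq, I_zero, inv_mul_cancel₀ sqrt_two_pi_pos.ne']

lemma m1 : ∫ x, x ^ 1 ∂(gaussianReal 0 1) = 0 := by
  rw [moment_eq, I_one, mul_zero]

lemma sqrt_mul_sqrt : Real.sqrt 2 * Real.sqrt π = Real.sqrt (2 * π) :=
  (Real.sqrt_mul (by norm_num) π).symm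

lemma I_two : I 2 = Real.sqrt (2 * π) := by
  have := I_rec 0; rw [I_zero] at this; norm_num at this; rw [this, sqrt_mul_sqrt]

lemma m2 : ∫ x, x ^ 2 ∂(gaussianReal 0 1) = 1 := by
  rw [moment_eq, I_two, inv_mul_cancel₀ sqrt_two_pi_pos.ne']

lemma m3 : ∫ x, x ^ 3 ∂(gaussianReal 0 1) = 0 := by
  have := I_rec 1; rw [I_one] at this
  rw [moment_eq, this]; norm_num

lemma I_four : I 4 = 3 * Real.sqrt (2 * π) := by
  have := I_rec 2; rw [I_two] at this; norm_num at this; rw [this, sqrt_mul_sqrt]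

lemma m4 : ∫ x, x ^ 4 ∂(gaussianReal 0 1) = 3 := by
  rw [moment_eq, I_four]
  field_simp

lemma m6 : ∫ x, x ^ 6 ∂(gaussianReal 0 1) = 15 := by
  have h := I_rec 4; rw [I_four] at h; norm_num at h
  rw [moment_eq, h, ← sqrt_mul_sqrt] at *
  have h2 : Real.sqrt 2 * Real.sqrt π ≠ 0 := by
    rw [sqrt_mul_sqrt]; exact sqrt_two_pi_pos.ne'
  field_simp
  ring


/-! ### One-dimensional moments (stubs for testing; real proofs in a.lean/b.lean) -/

/-! ### The product measure and polynomial functionals -/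

noncomputable def P (d : ℕ) : Measure (Fin d → ℝ) := Measure.pi fun _ => gaussianReal 0 1

instance (d : ℕ) : IsProbabilityMeasure (P d) := by unfold P; infer_instance

instance (d : ℕ) : SigmaFinite (P d) := by infer_instance

def Sq {d : ℕ} (y : Fin d → ℝ) : ℝ := ∑ i, (y i) ^ 2

def dot {d : ℕ} (g : Fin d → ℝ) (y : Fin d → ℝ) : ℝ := ∑ i, g i * y i

lemma Sq_insertNth {d : ℕ} (t : ℝ) (v : Fin d → ℝ) :
    Sq (Fin.insertNth 0 t v) = t ^ 2 + Sq v := by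
  rw [Fin.insertNth_zero']
  rw [Sq, Fin.sum_univ_succ]
  simp [Sq]

lemma dot_insertNth {d : ℕ} (g : Fin (d+1) → ℝ) (t : ℝ) (v : Fin d → ℝ) :
    dot g (Fin.insertNth 0 t v) = g 0 * t + dot (fun j => g j.succ) v := by
  rw [Fin.insertNth_zero']
  rw [dot, Fin.sum_univ_succ]
  simp [dot]

lemma P_succ (d : ℕ) :
    P (d + 1) = ((gaussianReal 0 1).prod (P d)).map
      (MeasurableEquiv.piFinSuccAbove (fun _ : Fin (d+1) => ℝ) 0).symm := by
  have h := measurePreserving_piFinSuccAbove (fun _ : Fin (d+1) => gaussianReal 0 1) 0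
  exact (h.symm _).map_eq.symm

lemma integral_P_succ (d : ℕ) (F : (Fin (d+1) → ℝ) → ℝ) :
    ∫ y, F y ∂(P (d+1)) =
      ∫ z : ℝ × (Fin d → ℝ), F (Fin.insertNth 0 z.1 z.2) ∂((gaussianReal 0 1).prod (P d)) := by
  rw [P_succ, integral_map_equiv]
  rfl

lemma integrable_P_succ_iff (d : ℕ) (F : (Fin (d+1) → ℝ) → ℝ) :
    Integrable F (P (d+1)) ↔
      Integrable (fun z : ℝ × (Fin d → ℝ) => F (Fin.insertNth 0 z.1 z.2))
        ((gaussianReal 0 1).prod (P d)) := by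
  rw [P_succ, integrable_map_equiv]
  rfl

/-- A single product term over the product measure. -/
lemma term_integrable {d : ℕ} (p : ℕ) {g : (Fin d → ℝ) → ℝ} (hg : Integrable g (P d)) :
    Integrable (fun z : ℝ × (Fin d → ℝ) => z.1 ^ p * g z.2)
      ((gaussianReal 0 1).prod (P d)) :=
  (integrable_pow_gauss p).mul_prod hg

lemma term_integral {d : ℕ} (p : ℕ) (g : (Fin d → ℝ) → ℝ) :
    ∫ z : ℝ × (Fin d → ℝ), z.1 ^ p * g z.2 ∂((gaussianReal 0 1).prod (P d))
      = (∫ t, t ^ p ∂(gaussianReal 0 1)) * ∫ v, g v ∂(P d) :=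
  integral_prod_mul _ _

/-- The main induction: integrability and values of all needed polynomial moments. -/
theorem main_ind (d : ℕ) :
    Integrable (fun y => Sq y) (P d) ∧
    Integrable (fun y => Sq y ^ 2) (P d) ∧
    Integrable (fun y => Sq y ^ 3) (P d) ∧
    (∫ y, Sq y ∂(P d)) = d ∧
    (∫ y, Sq y ^ 2 ∂(P d)) = d * (d + 2) ∧
    (∫ y, Sq y ^ 3 ∂(P d)) = d * (d + 2) * (d + 4) ∧
    ∀ g : Fin d → ℝ,
      Integrable (fun y => dot g y) (P d) ∧
      Integrable (fun y => (dot g y) ^ 2) (P d) ∧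
      Integrable (fun y => dot g y * Sq y) (P d) ∧
      Integrable (fun y => (dot g y) ^ 2 * Sq y) (P d) ∧
      (∫ y, (dot g y) ^ 2 ∂(P d)) = ∑ i, (g i) ^ 2 ∧
      (∫ y, (dot g y) ^ 2 * Sq y ∂(P d)) = (d + 2) * ∑ i, (g i) ^ 2 := by
  induction d with
  | zero =>
      have hSq : (Sq : (Fin 0 → ℝ) → ℝ) = fun _ => 0 := by
        funext y; simp [Sq]
      have hdot : ∀ g : Fin 0 → ℝ, (dot g : (Fin 0 → ℝ) → ℝ) = fun _ => 0 := by
        intro g; funext y; simp [dot]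
      refine ⟨?_, ?_, ?_, ?_, ?_, ?_, ?_⟩
      · rw [hSq]; exact integrable_const 0
      · rw [hSq]; simpa using (integrable_const (0:ℝ))
      · rw [hSq]; simpa using (integrable_const (0:ℝ))
      · rw [hSq]; simp
      · rw [hSq]; norm_num
      · rw [hSq]; norm_num
      · intro g
        refine ⟨?_, ?_, ?_, ?_, ?_, ?_⟩ <;> rw [hdot g] <;>
          first
          | (rw [hSq]; norm_num)
          | (try rw [hSq]); simp
  | succ d IH =>
      obtain ⟨iS, iS2, iS3, vS, vS2, vS3, hg⟩ := IH
      -- notation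
      set γ := gaussianReal 0 1 with hγ
      have one_int : Integrable (fun _ : Fin d → ℝ => (1:ℝ)) (P d) := integrable_const 1
      have one_val : (∫ _v : Fin d → ℝ, (1:ℝ) ∂(P d)) = 1 := by simp

      -- transfer helpers
      have one_val' : (∫ _v : Fin d → ℝ, (1:ℝ) ∂(P d)) = 1 := one_val
      -- ### Sq
      have eS : ∀ z : ℝ × (Fin d → ℝ),
          Sq (Fin.insertNth 0 z.1 z.2) = z.1 ^ 2 * (1:ℝ) + z.1 ^ 0 * Sq z.2 := by
        intro z; rw [Sq_insertNth]; ring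
      have iS' : Integrable (fun y => Sq y) (P (d+1)) := by
        rw [integrable_P_succ_iff]
        exact ((term_integrable 2 one_int).add (term_integrable 0 iS)).congr
          (Filter.Eventually.of_forall fun z => (eS z).symm)
      have vS' : (∫ y, Sq y ∂(P (d+1))) = (d:ℝ) + 1 := by
        rw [integral_P_succ]
        rw [integral_congr_ae (Filter.Eventually.of_forall eS)]
        rw [integral_add (term_integrable 2 one_int) (term_integrable 0 iS),
          term_integral 2 (fun _ => (1:ℝ)), term_integral 0 (fun v => Sq v), m2, m0, one_val, vS]
        ring
      -- ### Sq ^ 2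
      have eS2 : ∀ z : ℝ × (Fin d → ℝ),
          Sq (Fin.insertNth 0 z.1 z.2) ^ 2
            = z.1 ^ 4 * (1:ℝ) + 2 * (z.1 ^ 2 * Sq z.2) + z.1 ^ 0 * (Sq z.2 ^ 2) := by
        intro z; rw [Sq_insertNth]; ring
      have hiS2 : Integrable (fun y : Fin d → ℝ => Sq y ^ 2) (P d) := iS2
      have i21 := term_integrable (d := d) 4 one_int
      have i22 := (term_integrable (d := d) 2 iS).const_mul 2
      have i23 := term_integrable (d := d) 0 iS2
      have iS2' : Integrable (fun y => Sq y ^ 2) (P (d+1)) := by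
        rw [integrable_P_succ_iff]
        exact ((i21.add i22).add i23).congr
          (Filter.Eventually.of_forall fun z => (eS2 z).symm)
      have vS2' : (∫ y, Sq y ^ 2 ∂(P (d+1))) = ((d:ℝ) + 1) * ((d:ℝ) + 1 + 2) := by
        rw [integral_P_succ]
        rw [integral_congr_ae (Filter.Eventually.of_forall eS2)]
        have p12 : Integrable (fun z : ℝ × (Fin d → ℝ) =>
            z.1 ^ 4 * (1:ℝ) + 2 * (z.1 ^ 2 * Sq z.2)) ((gaussianReal 0 1).prod (P d)) := by
          exact i21.add i22
        rw [integral_add p12 i23, integral_add i21 i22]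
        simp only [integral_const_mul]
        rw [term_integral 4 (fun _ => (1:ℝ)), term_integral 2 (fun v => Sq v),
          term_integral 0 (fun v => Sq v ^ 2), m4, m2, m0, one_val, vS, vS2]
        ring
      -- ### Sq ^ 3
      have eS3 : ∀ z : ℝ × (Fin d → ℝ),
          Sq (Fin.insertNth 0 z.1 z.2) ^ 3
            = z.1 ^ 6 * (1:ℝ) + 3 * (z.1 ^ 4 * Sq z.2) + 3 * (z.1 ^ 2 * (Sq z.2 ^ 2))
              + z.1 ^ 0 * (Sq z.2 ^ 3) := by
        intro z; rw [Sq_insertNth]; ring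
      have i31 := term_integrable (d := d) 6 one_int
      have i32 := (term_integrable (d := d) 4 iS).const_mul 3
      have i33 := (term_integrable (d := d) 2 iS2).const_mul 3
      have i34 := term_integrable (d := d) 0 iS3
      have iS3' : Integrable (fun y => Sq y ^ 3) (P (d+1)) := by
        rw [integrable_P_succ_iff]
        exact (((i31.add i32).add i33).add i34).congr
          (Filter.Eventually.of_forall fun z => (eS3 z).symm)
      have vS3' : (∫ y, Sq y ^ 3 ∂(P (d+1)))
          = ((d:ℝ) + 1) * ((d:ℝ) + 1 + 2) * ((d:ℝ) + 1 + 4) := by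
        rw [integral_P_succ]
        rw [integral_congr_ae (Filter.Eventually.of_forall eS3)]
        have p12 : Integrable (fun z : ℝ × (Fin d → ℝ) =>
            z.1 ^ 6 * (1:ℝ) + 3 * (z.1 ^ 4 * Sq z.2)) ((gaussianReal 0 1).prod (P d)) := by
          exact i31.add i32
        have p123 : Integrable (fun z : ℝ × (Fin d → ℝ) =>
            z.1 ^ 6 * (1:ℝ) + 3 * (z.1 ^ 4 * Sq z.2) + 3 * (z.1 ^ 2 * (Sq z.2 ^ 2)))
            ((gaussianReal 0 1).prod (P d)) := by
          exact p12.add i33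
        rw [integral_add p123 i34, integral_add p12 i33, integral_add i31 i32]
        simp only [integral_const_mul]
        rw [term_integral 6 (fun _ => (1:ℝ)), term_integral 4 (fun v => Sq v),
          term_integral 2 (fun v => Sq v ^ 2), term_integral 0 (fun v => Sq v ^ 3),
          m6, m4, m2, m0, one_val, vS, vS2, vS3]
        ring
      -- assemble
      refine ⟨iS', iS2', iS3', by push_cast; exact vS', by push_cast; exact vS2',
        by push_cast; exact vS3', ?_⟩
      intro g
      set a : ℝ := g 0 with ha
      set g' : Fin d → ℝ := fun j => g j.succ with hg'
      obtain ⟨iB, iB2, iBS, iB2S, vB2, vB2S⟩ := hg g'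
      have hsum : ∑ i, (g i) ^ 2 = a ^ 2 + ∑ j, (g' j) ^ 2 := by
        rw [Fin.sum_univ_succ]
      -- ### dot
      have eD : ∀ z : ℝ × (Fin d → ℝ),
          dot g (Fin.insertNth 0 z.1 z.2) = a * (z.1 ^ 1 * (1:ℝ)) + z.1 ^ 0 * dot g' z.2 := by
        intro z; rw [dot_insertNth]; ring
      have iD1 := (term_integrable (d := d) 1 one_int).const_mul a
      have iD2 := term_integrable (d := d) 0 iB
      have iD' : Integrable (fun y => dot g y) (P (d+1)) := by
        rw [integrable_P_succ_iff]
        exact (iD1.add iD2).congr (Filter.Eventually.of_forall fun z => (eD z).symm)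
      -- ### dot ^ 2
      have eD2 : ∀ z : ℝ × (Fin d → ℝ),
          dot g (Fin.insertNth 0 z.1 z.2) ^ 2
            = a ^ 2 * (z.1 ^ 2 * (1:ℝ)) + (2 * a) * (z.1 ^ 1 * dot g' z.2)
              + z.1 ^ 0 * (dot g' z.2 ^ 2) := by
        intro z; rw [dot_insertNth]; ring
      have iQ1 := (term_integrable (d := d) 2 one_int).const_mul (a ^ 2)
      have iQ2 := (term_integrable (d := d) 1 iB).const_mul (2 * a)
      have iQ3 := term_integrable (d := d) 0 iB2
      have iD2' : Integrable (fun y => (dot g y) ^ 2) (P (d+1)) := by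
        rw [integrable_P_succ_iff]
        exact ((iQ1.add iQ2).add iQ3).congr
          (Filter.Eventually.of_forall fun z => (eD2 z).symm)
      have vD2' : (∫ y, (dot g y) ^ 2 ∂(P (d+1))) = ∑ i, (g i) ^ 2 := by
        rw [integral_P_succ]
        rw [integral_congr_ae (Filter.Eventually.of_forall eD2)]
        have p12 : Integrable (fun z : ℝ × (Fin d → ℝ) =>
            a ^ 2 * (z.1 ^ 2 * (1:ℝ)) + (2 * a) * (z.1 ^ 1 * dot g' z.2))
            ((gaussianReal 0 1).prod (P d)) := by
          exact iQ1.add iQ2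
        rw [integral_add p12 iQ3, integral_add iQ1 iQ2]
        simp only [integral_const_mul]
        rw [term_integral 2 (fun _ => (1:ℝ)), term_integral 1 (fun v => dot g' v),
          term_integral 0 (fun v => dot g' v ^ 2), m2, m1, m0, one_val, vB2, hsum]
        ring
      -- ### dot * Sq
      have eDS : ∀ z : ℝ × (Fin d → ℝ),
          dot g (Fin.insertNth 0 z.1 z.2) * Sq (Fin.insertNth 0 z.1 z.2)
            = a * (z.1 ^ 3 * (1:ℝ)) + a * (z.1 ^ 1 * Sq z.2)
              + z.1 ^ 2 * dot g' z.2 + z.1 ^ 0 * (dot g' z.2 * Sq z.2) := by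
        intro z; rw [dot_insertNth, Sq_insertNth]; ring
      have iR1 := (term_integrable (d := d) 3 one_int).const_mul a
      have iR2 := (term_integrable (d := d) 1 iS).const_mul a
      have iR3 := term_integrable (d := d) 2 iB
      have iR4 := term_integrable (d := d) 0 iBS
      have iDS' : Integrable (fun y => dot g y * Sq y) (P (d+1)) := by
        rw [integrable_P_succ_iff]
        exact (((iR1.add iR2).add iR3).add iR4).congr
          (Filter.Eventually.of_forall fun z => (eDS z).symm)
      -- ### dot ^ 2 * Sq
      have eD2S : ∀ z : ℝ × (Fin d → ℝ),
          dot g (Fin.insertNth 0 z.1 z.2) ^ 2 * Sq (Fin.insertNth 0 z.1 z.2)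
            = a ^ 2 * (z.1 ^ 4 * (1:ℝ)) + (2 * a) * (z.1 ^ 3 * dot g' z.2)
              + z.1 ^ 2 * (dot g' z.2 ^ 2) + a ^ 2 * (z.1 ^ 2 * Sq z.2)
              + (2 * a) * (z.1 ^ 1 * (dot g' z.2 * Sq z.2))
              + z.1 ^ 0 * (dot g' z.2 ^ 2 * Sq z.2) := by
        intro z; rw [dot_insertNth, Sq_insertNth]; ring
      have iT1 := (term_integrable (d := d) 4 one_int).const_mul (a ^ 2)
      have iT2 := (term_integrable (d := d) 3 iB).const_mul (2 * a)
      have iT3 := term_integrable (d := d) 2 iB2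
      have iT4 := (term_integrable (d := d) 2 iS).const_mul (a ^ 2)
      have iT5 := (term_integrable (d := d) 1 iBS).const_mul (2 * a)
      have iT6 := term_integrable (d := d) 0 iB2S
      have iD2S' : Integrable (fun y => (dot g y) ^ 2 * Sq y) (P (d+1)) := by
        rw [integrable_P_succ_iff]
        exact (((((iT1.add iT2).add iT3).add iT4).add iT5).add iT6).congr
          (Filter.Eventually.of_forall fun z => (eD2S z).symm)
      have vD2S' : (∫ y, (dot g y) ^ 2 * Sq y ∂(P (d+1)))
          = ((d:ℝ) + 1 + 2) * ∑ i, (g i) ^ 2 := by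
        rw [integral_P_succ]
        rw [integral_congr_ae (Filter.Eventually.of_forall eD2S)]
        have p12 : Integrable (fun z : ℝ × (Fin d → ℝ) =>
            a ^ 2 * (z.1 ^ 4 * (1:ℝ)) + (2 * a) * (z.1 ^ 3 * dot g' z.2))
            ((gaussianReal 0 1).prod (P d)) := by
          exact iT1.add iT2
        have p123 : Integrable (fun z : ℝ × (Fin d → ℝ) =>
            a ^ 2 * (z.1 ^ 4 * (1:ℝ)) + (2 * a) * (z.1 ^ 3 * dot g' z.2)
              + z.1 ^ 2 * (dot g' z.2 ^ 2)) ((gaussianReal 0 1).prod (P d)) := by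
          exact p12.add iT3
        have p1234 : Integrable (fun z : ℝ × (Fin d → ℝ) =>
            a ^ 2 * (z.1 ^ 4 * (1:ℝ)) + (2 * a) * (z.1 ^ 3 * dot g' z.2)
              + z.1 ^ 2 * (dot g' z.2 ^ 2) + a ^ 2 * (z.1 ^ 2 * Sq z.2))
            ((gaussianReal 0 1).prod (P d)) := by
          exact p123.add iT4
        have p12345 : Integrable (fun z : ℝ × (Fin d → ℝ) =>
            a ^ 2 * (z.1 ^ 4 * (1:ℝ)) + (2 * a) * (z.1 ^ 3 * dot g' z.2)
              + z.1 ^ 2 * (dot g' z.2 ^ 2) + a ^ 2 * (z.1 ^ 2 * Sq z.2)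
              + (2 * a) * (z.1 ^ 1 * (dot g' z.2 * Sq z.2)))
            ((gaussianReal 0 1).prod (P d)) := by
          exact p1234.add iT5
        rw [integral_add p12345 iT6, integral_add p1234 iT5, integral_add p123 iT4,
          integral_add p12 iT3, integral_add iT1 iT2]
        simp only [integral_const_mul]
        rw [term_integral 4 (fun _ => (1:ℝ)), term_integral 3 (fun v => dot g' v),
          term_integral 2 (fun v => dot g' v ^ 2), term_integral 2 (fun v => Sq v),
          term_integral 1 (fun v => dot g' v * Sq v),
          term_integral 0 (fun v => dot g' v ^ 2 * Sq v),
          m4, m3, m2, m1, m0, one_val, vS, vB2, vB2S, hsum]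
        ring
      exact ⟨iD', iD2', iDS', iD2S', vD2', by push_cast; exact vD2S'⟩




variable {d : ℕ}

lemma fderiv_apply_eq_inner_gradient {E : Type*} [NormedAddCommGroup E] [InnerProductSpace ℝ E]
    [CompleteSpace E] (f : E → ℝ) (z v : E) :
    fderiv ℝ f z v = inner ℝ (gradient f z) v := by
  rw [gradient, ← InnerProductSpace.toDual_apply_apply]
  rw [(InnerProductSpace.toDual ℝ E).apply_symm_apply]

lemma taylor_bound {E : Type*} [NormedAddCommGroup E] [InnerProductSpace ℝ E]
    [CompleteSpace E] (f : E → ℝ) (L : ℝ) (hL : 0 ≤ L)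
    (hf : Differentiable ℝ f)
    (hsmooth : ∀ x y, ‖gradient f x - gradient f y‖ ≤ L * ‖x - y‖)
    (x v : E) :
    |f (x + v) - f x - inner ℝ (gradient f x) v| ≤ L / 2 * ‖v‖ ^ 2 := by
  have hgradcont : Continuous (fun z => gradient f z) := by
    have : LipschitzWith (Real.toNNReal L) (fun z => gradient f z) := by
      apply LipschitzWith.of_dist_le_mul
      intro a b
      rw [dist_eq_norm, dist_eq_norm]
      calc ‖gradient f a - gradient f b‖ ≤ L * ‖a - b‖ := hsmooth a b
        _ = Real.toNNReal L * ‖a - b‖ := by rw [Real.coe_toNNReal _ hL]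
    exact this.continuous
  have hpath : ∀ t : ℝ, HasDerivAt (fun t : ℝ => x + t • v) v t := by
    intro t
    simpa using ((hasDerivAt_id t).smul_const v).const_add x
  have hphi : ∀ t : ℝ, HasDerivAt (fun t : ℝ => f (x + t • v))
      (inner ℝ (gradient f (x + t • v)) v) t := by
    intro t
    have h1 := (hf (x + t • v)).hasFDerivAt
    have := h1.comp_hasDerivAt t (hpath t)
    rw [fderiv_apply_eq_inner_gradient] at this
    exact this
  have hcont : Continuous (fun t : ℝ => (inner ℝ (gradient f (x + t • v)) v : ℝ)) := by
    apply Continuous.inner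
    · exact hgradcont.comp (by continuity)
    · exact continuous_const
  have hftc : f (x + v) - f x = ∫ t in (0:ℝ)..1, (inner ℝ (gradient f (x + t • v)) v : ℝ) := by
    have := intervalIntegral.integral_eq_sub_of_hasDerivAt
      (f := fun t : ℝ => f (x + t • v))
      (fun t _ => hphi t) (hcont.intervalIntegrable 0 1)
    rw [this]
    simp
  have hconst : (inner ℝ (gradient f x) v : ℝ) = ∫ t in (0:ℝ)..1, (inner ℝ (gradient f x) v : ℝ) := by
    simp
  rw [hftc, hconst, ← intervalIntegral.integral_sub (hcont.intervalIntegrable 0 1)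
    (intervalIntegrable_const)]
  have hbound : ∀ t ∈ Set.Icc (0:ℝ) 1,
      ‖(inner ℝ (gradient f (x + t • v)) v : ℝ) - inner ℝ (gradient f x) v‖ ≤ L * ‖v‖^2 * t := by
    intro t ht
    rw [← inner_sub_left]
    calc ‖(inner ℝ (gradient f (x + t • v) - gradient f x) v : ℝ)‖
        ≤ ‖gradient f (x + t • v) - gradient f x‖ * ‖v‖ := norm_inner_le_norm (𝕜 := ℝ) _ _
      _ ≤ (L * ‖(x + t • v) - x‖) * ‖v‖ := by
          apply mul_le_mul_of_nonneg_right (hsmooth _ _) (norm_nonneg v)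
      _ = (L * (t * ‖v‖)) * ‖v‖ := by
          rw [add_sub_cancel_left, norm_smul, Real.norm_eq_abs, abs_of_nonneg ht.1]
      _ = L * ‖v‖^2 * t := by ring
  calc |∫ t in (0:ℝ)..1, ((inner ℝ (gradient f (x + t • v)) v : ℝ) - inner ℝ (gradient f x) v)|
      ≤ |∫ t in (0:ℝ)..1, L * ‖v‖^2 * t| := by
        rw [← Real.norm_eq_abs]
        refine (intervalIntegral.norm_integral_le_of_norm_le
          (g := fun t => L * ‖v‖^2 * t) (by norm_num) ?_ ?_).trans (le_abs_self _)
        · filter_upwards with t ht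
          exact hbound t ⟨ht.1.le, ht.2⟩
        · apply Continuous.intervalIntegrable; continuity
    _ = L / 2 * ‖v‖^2 := by
        rw [intervalIntegral.integral_const_mul, integral_id]
        rw [abs_of_nonneg (by positivity)]
        ring


end ZO

open MeasureTheory ProbabilityTheory

/-- Lemma 5: the second moment of the zeroth-order estimator
`g_μ(x; u) = ((f(x + μu) - f(x))/μ) u`, with `u ~ N(0, I_d)`, satisfies
`E_u[‖g_μ(x; u)‖²] ≤ (μ²/2) L² (d+6)³ + 2(d+4)‖∇f(x)‖²`. -/
theorem zo_estimator_second_moment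
    (d : ℕ) (hd : 1 ≤ d) (L μ : ℝ) (hL : 0 ≤ L) (hμ : 0 < μ)
    (f : EuclideanSpace ℝ (Fin d) → ℝ)
    (hf : Differentiable ℝ f)
    (hsmooth : ∀ x y, ‖gradient f x - gradient f y‖ ≤ L * ‖x - y‖)
    (x : EuclideanSpace ℝ (Fin d)) :
    ∫ u, ‖((f (x + μ • u) - f x) / μ) • u‖ ^ 2 ∂stdGaussian d
      ≤ μ ^ 2 / 2 * L ^ 2 * ((d : ℝ) + 6) ^ 3 + 2 * ((d : ℝ) + 4) * ‖gradient f x‖ ^ 2 := by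
  classical
  set G := gradient f x with hG
  set gv : Fin d → ℝ := fun i => G i with hgv
  obtain ⟨iS, iS2, iS3, vS, vS2, vS3, hdot⟩ := ZO.main_ind d
  obtain ⟨iD, iD2, iDS, iD2S, vD2, vD2S⟩ := hdot gv
  set e : (Fin d → ℝ) ≃ᵐ EuclideanSpace ℝ (Fin d) :=
    (MeasurableEquiv.toLp 2 (Fin d → ℝ)) with he
  have hstd : stdGaussian d = (ZO.P d).map e := rfl
  have hcoord : ∀ (y : Fin d → ℝ) (i : Fin d), (e y) i = y i := fun y i => rfl
  have hnorm : ∀ y : Fin d → ℝ, ‖e y‖ ^ 2 = ZO.Sq y := by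
    intro y
    rw [EuclideanSpace.norm_eq, Real.sq_sqrt (by positivity)]
    unfold ZO.Sq
    congr 1; funext i
    rw [hcoord, Real.norm_eq_abs, sq_abs]
  have hinner : ∀ y : Fin d → ℝ, (inner ℝ G (e y) : ℝ) = ZO.dot gv y := by
    intro y
    simp only [PiLp.inner_apply, RCLike.inner_apply, conj_trivial]
    exact Finset.sum_congr rfl fun i _ => mul_comm _ _
  have hnormG : ‖G‖ ^ 2 = ∑ i, (gv i) ^ 2 := by
    rw [EuclideanSpace.norm_eq, Real.sq_sqrt (by positivity)]
    congr 1; funext i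
    rw [Real.norm_eq_abs, sq_abs]
  -- pointwise bound
  have hpt : ∀ u : EuclideanSpace ℝ (Fin d),
      ‖((f (x + μ • u) - f x) / μ) • u‖ ^ 2
        ≤ 2 * (inner ℝ G u : ℝ) ^ 2 * ‖u‖ ^ 2 + (L ^ 2 * μ ^ 2 / 2) * (‖u‖ ^ 2) ^ 3 := by
    intro u
    have tb := ZO.taylor_bound f L hL hf hsmooth x (μ • u)
    rw [real_inner_smul_right] at tb
    have hnsmul : ‖μ • u‖ ^ 2 = μ ^ 2 * ‖u‖ ^ 2 := by
      rw [norm_smul, mul_pow, Real.norm_eq_abs, sq_abs]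
    rw [hnsmul] at tb
    set c := (f (x + μ • u) - f x) / μ with hc
    set A := (inner ℝ G u : ℝ) with hA
    have hca : |c - A| ≤ L / 2 * μ * ‖u‖ ^ 2 := by
      have : c - A = (f (x + μ • u) - f x - μ * A) / μ := by
        rw [hc]; field_simp
      rw [this, abs_div, abs_of_pos hμ, div_le_iff₀ hμ]
      calc |f (x + μ • u) - f x - μ * A| ≤ L / 2 * (μ ^ 2 * ‖u‖ ^ 2) := tb
        _ = L / 2 * μ * ‖u‖ ^ 2 * μ := by ring
    have hsq : (c - A) ^ 2 ≤ (L / 2 * μ * ‖u‖ ^ 2) ^ 2 := by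
      rw [← sq_abs (c - A)]
      exact pow_le_pow_left₀ (abs_nonneg _) hca 2
    have hns : ‖c • u‖ ^ 2 = c ^ 2 * ‖u‖ ^ 2 := by
      rw [norm_smul, mul_pow, Real.norm_eq_abs, sq_abs]
    rw [hns]
    nlinarith [sq_nonneg (c - 2 * A), sq_nonneg ‖u‖, mul_le_mul_of_nonneg_right hsq (sq_nonneg ‖u‖), sq_nonneg (c - A), sq_nonneg A]
  -- integrable majorant
  have hRHSint : Integrable (fun u : EuclideanSpace ℝ (Fin d) =>
      2 * (inner ℝ G u : ℝ) ^ 2 * ‖u‖ ^ 2 + (L ^ 2 * μ ^ 2 / 2) * (‖u‖ ^ 2) ^ 3)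
      (stdGaussian d) := by
    rw [hstd, integrable_map_equiv]
    have : Integrable (fun y : Fin d → ℝ =>
        2 * (ZO.dot gv y) ^ 2 * ZO.Sq y + (L ^ 2 * μ ^ 2 / 2) * (ZO.Sq y) ^ 3) (ZO.P d) := by
      have h1 : Integrable (fun y : Fin d → ℝ => 2 * ((ZO.dot gv y) ^ 2 * ZO.Sq y)) (ZO.P d) :=
        iD2S.const_mul 2
      have h2 : Integrable (fun y : Fin d → ℝ => (L ^ 2 * μ ^ 2 / 2) * (ZO.Sq y) ^ 3) (ZO.P d) :=
        iS3.const_mul _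
      exact (h1.add h2).congr (Filter.Eventually.of_forall fun y => by
        simp only [Pi.add_apply]; ring)
    refine this.congr (Filter.Eventually.of_forall fun y => ?_)
    simp only [Function.comp]
    rw [hinner, hnorm]
  -- compare integrals
  have hle : ∫ u, ‖((f (x + μ • u) - f x) / μ) • u‖ ^ 2 ∂stdGaussian d
      ≤ ∫ u, (2 * (inner ℝ G u : ℝ) ^ 2 * ‖u‖ ^ 2 + (L ^ 2 * μ ^ 2 / 2) * (‖u‖ ^ 2) ^ 3)
          ∂stdGaussian d := by
    apply integral_mono_of_nonneg
    · exact Filter.Eventually.of_forall fun u => by positivity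
    · exact hRHSint
    · exact Filter.Eventually.of_forall hpt
  -- compute the RHS integral
  have hval : ∫ u, (2 * (inner ℝ G u : ℝ) ^ 2 * ‖u‖ ^ 2 + (L ^ 2 * μ ^ 2 / 2) * (‖u‖ ^ 2) ^ 3)
        ∂stdGaussian d
      = 2 * ((d : ℝ) + 2) * ‖G‖ ^ 2 + (L ^ 2 * μ ^ 2 / 2) * ((d:ℝ) * ((d:ℝ) + 2) * ((d:ℝ) + 4)) := by
    rw [hstd, integral_map_equiv]
    have hcongr : ∀ y : Fin d → ℝ,
        2 * (inner ℝ G (e y) : ℝ) ^ 2 * ‖e y‖ ^ 2 + (L ^ 2 * μ ^ 2 / 2) * (‖e y‖ ^ 2) ^ 3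
          = 2 * ((ZO.dot gv y) ^ 2 * ZO.Sq y) + (L ^ 2 * μ ^ 2 / 2) * (ZO.Sq y) ^ 3 := by
      intro y; rw [hinner, hnorm]; ring
    rw [integral_congr_ae (Filter.Eventually.of_forall hcongr)]
    rw [integral_add (iD2S.const_mul 2) (iS3.const_mul _), integral_const_mul, integral_const_mul,
      vD2S, vS3, hnormG]
    ring
  rw [hval] at hle
  refine hle.trans ?_
  have hd0 : (0:ℝ) ≤ (d:ℝ) := Nat.cast_nonneg d
  have hG2 : (0:ℝ) ≤ ‖G‖ ^ 2 := sq_nonneg _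
  have hLμ : (0:ℝ) ≤ L ^ 2 * μ ^ 2 / 2 := by positivity
  have t1 : (L ^ 2 * μ ^ 2 / 2) * ((d:ℝ) * ((d:ℝ) + 2) * ((d:ℝ) + 4))
      ≤ (L ^ 2 * μ ^ 2 / 2) * ((d:ℝ) + 6) ^ 3 :=
    mul_le_mul_of_nonneg_left (by nlinarith [mul_nonneg hd0 hd0]) hLμ
  have t2 : 2 * ((d:ℝ) + 2) * ‖G‖ ^ 2 ≤ 2 * ((d:ℝ) + 4) * ‖G‖ ^ 2 :=
    mul_le_mul_of_nonneg_right (by linarith) hG2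
  have t3 : μ ^ 2 / 2 * L ^ 2 * ((d:ℝ) + 6) ^ 3 = (L ^ 2 * μ ^ 2 / 2) * ((d:ℝ) + 6) ^ 3 := by ring
  linarith
end

section
/- Descent inequality at a perturbed point: Let d ≥ 1, L ≥ 0, η > 0, and let f : ℝ^d → ℝ be differentiable and L-smooth. Then for all x, x̃ ∈ ℝ^d, f(x̃ − η ∇f(x)) ≤ f(x̃) − (η/2)‖∇f(x)‖² − (η/2)‖∇f(x̃)‖² + (η L²/2)‖x − x̃‖² + (L η²/2)‖∇f(x)‖². -/
open intervalIntegral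

lemma descent_lemma_aux
    (d : ℕ) (L : ℝ) (hL : 0 ≤ L)
    (f : EuclideanSpace ℝ (Fin d) → ℝ)
    (hf : Differentiable ℝ f)
    (hsmooth : ∀ x y, ‖gradient f x - gradient f y‖ ≤ L * ‖x - y‖) :
    ∀ x y : EuclideanSpace ℝ (Fin d),
      f y ≤ f x + inner ℝ (gradient f x) (y - x) + L / 2 * ‖y - x‖ ^ 2 := by
  intro x y
  set v := y - x with hv
  -- gradient is continuous
  have hgradLip : LipschitzWith ⟨L, hL⟩ (gradient f) := by
    apply LipschitzWith.of_dist_le_mul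
    intro a b
    rw [dist_eq_norm, dist_eq_norm]; exact hsmooth a b
  have hgradCont : Continuous (gradient f) := hgradLip.continuous
  -- the one-dimensional function along the segment
  have hderiv : ∀ t : ℝ, HasDerivAt (fun t : ℝ => f (x + t • v))
      (inner ℝ (gradient f (x + t • v)) v) t := by
    intro t
    have h1 : HasDerivAt (fun t : ℝ => x + t • v) v t := by
      simpa using ((hasDerivAt_id t).smul_const v).const_add x
    have h2 := (hf (x + t • v)).hasGradientAt.hasFDerivAt
    have h4 : HasDerivAt (fun t : ℝ => f (x + t • v)) _ t := h2.comp_hasDerivAt t h1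
    simpa using h4
  have hcont : Continuous fun t : ℝ => (inner ℝ (gradient f (x + t • v)) v : ℝ) := by
    have hline : Continuous fun t : ℝ => x + t • v := by continuity
    exact Continuous.inner (hgradCont.comp hline) continuous_const
  have key : f (x + (1:ℝ) • v) - f (x + (0:ℝ) • v)
      = ∫ t in (0:ℝ)..1, inner ℝ (gradient f (x + t • v)) v := by
    rw [intervalIntegral.integral_eq_sub_of_hasDerivAt (fun t _ => hderiv t)
      (hcont.intervalIntegrable 0 1)]
  have hbound : ∀ t ∈ Set.Icc (0:ℝ) 1,
      (inner ℝ (gradient f (x + t • v)) v : ℝ)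
        ≤ inner ℝ (gradient f x) v + L * t * ‖v‖ ^ 2 := by
    intro t ht
    have h1 : (inner ℝ (gradient f (x + t • v)) v : ℝ) - inner ℝ (gradient f x) v
        = inner ℝ (gradient f (x + t • v) - gradient f x) v := by
      rw [inner_sub_left]
    have h2 : (inner ℝ (gradient f (x + t • v) - gradient f x) v : ℝ)
        ≤ ‖gradient f (x + t • v) - gradient f x‖ * ‖v‖ :=
      real_inner_le_norm _ _
    have h3 : ‖gradient f (x + t • v) - gradient f x‖ ≤ L * (t * ‖v‖) := by
      have := hsmooth (x + t • v) x
      simpa [norm_smul, abs_of_nonneg ht.1, mul_assoc] using this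
    nlinarith [norm_nonneg v, mul_le_mul_of_nonneg_right h3 (norm_nonneg v)]
  have hcont2 : Continuous fun t : ℝ => (inner ℝ (gradient f x) v : ℝ) + L * t * ‖v‖ ^ 2 :=
    continuous_const.add ((continuous_const.mul continuous_id).mul continuous_const)
  have hint : (∫ t in (0:ℝ)..1, inner ℝ (gradient f (x + t • v)) v : ℝ)
      ≤ ∫ t in (0:ℝ)..1, ((inner ℝ (gradient f x) v : ℝ) + L * t * ‖v‖ ^ 2) := by
    apply intervalIntegral.integral_mono_on (by norm_num)
      (hcont.intervalIntegrable 0 1) (hcont2.intervalIntegrable 0 1) hbound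
  have hval : (∫ t in (0:ℝ)..1, ((inner ℝ (gradient f x) v : ℝ) + L * t * ‖v‖ ^ 2))
      = (inner ℝ (gradient f x) v : ℝ) + L / 2 * ‖v‖ ^ 2 := by
    have heq : (fun t : ℝ => (inner ℝ (gradient f x) v : ℝ) + L * t * ‖v‖ ^ 2)
        = fun t : ℝ => (inner ℝ (gradient f x) v : ℝ) + (L * ‖v‖ ^ 2) * t := by
      funext t; ring
    have hI2 : IntervalIntegrable (fun t : ℝ => (L * ‖v‖ ^ 2) * t)
        MeasureTheory.volume 0 1 := by
      exact (continuous_const.mul continuous_id).intervalIntegrable 0 1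
    rw [heq, intervalIntegral.integral_add intervalIntegrable_const hI2,
      intervalIntegral.integral_const_mul, integral_id]
    simp
    ring
  have : f y - f x ≤ inner ℝ (gradient f x) v + L / 2 * ‖v‖ ^ 2 := by
    have := key
    simp only [one_smul, zero_smul, add_zero] at this
    rw [hv] at this
    rw [show x + (y - x) = y by abel] at this
    rw [this]
    exact le_trans hint (le_of_eq hval)
  linarith

/-- Descent inequality at a perturbed point for a differentiable `L`-smooth function:
`f(x̃ - η ∇f(x)) ≤ f(x̃) - (η/2)‖∇f(x)‖² - (η/2)‖∇f(x̃)‖² + (η L²/2)‖x - x̃‖²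
  + (L η²/2)‖∇f(x)‖²`. -/
theorem descent_inequality_perturbed_point
    (d : ℕ) (hd : 1 ≤ d) (L η : ℝ) (hL : 0 ≤ L) (hη : 0 < η)
    (f : EuclideanSpace ℝ (Fin d) → ℝ)
    (hf : Differentiable ℝ f)
    (hsmooth : ∀ x y, ‖gradient f x - gradient f y‖ ≤ L * ‖x - y‖) :
    ∀ x xt : EuclideanSpace ℝ (Fin d),
      f (xt - η • gradient f x)
        ≤ f xt - (η / 2) * ‖gradient f x‖ ^ 2 - (η / 2) * ‖gradient f xt‖ ^ 2
          + (η * L ^ 2 / 2) * ‖x - xt‖ ^ 2 + (L * η ^ 2 / 2) * ‖gradient f x‖ ^ 2 := by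
  intro x xt
  have key := descent_lemma_aux d L hL f hf hsmooth xt (xt - η • gradient f x)
  have hsub : xt - η • gradient f x - xt = -(η • gradient f x) := by abel
  rw [hsub] at key
  have hinner : (inner ℝ (gradient f xt) (-(η • gradient f x)) : ℝ)
      = -η * inner ℝ (gradient f xt) (gradient f x) := by
    rw [inner_neg_right, real_inner_smul_right]; ring
  have hnorm : ‖-(η • gradient f x)‖ ^ 2 = η ^ 2 * ‖gradient f x‖ ^ 2 := by
    rw [norm_neg, norm_smul]
    simp [abs_of_pos hη]; ring
  rw [hinner, hnorm] at key
  -- inner product identity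
  have hid : (inner ℝ (gradient f xt) (gradient f x) : ℝ)
      = (‖gradient f xt‖ ^ 2 + ‖gradient f x‖ ^ 2 - ‖gradient f xt - gradient f x‖ ^ 2) / 2 := by
    have := @norm_sub_sq_real (EuclideanSpace ℝ (Fin d)) _ _ (gradient f xt) (gradient f x)
    linarith
  have hlip : ‖gradient f xt - gradient f x‖ ≤ L * ‖x - xt‖ := by
    have := hsmooth xt x
    calc ‖gradient f xt - gradient f x‖ ≤ L * ‖xt - x‖ := this
      _ = L * ‖x - xt‖ := by rw [norm_sub_rev]
  have hlip2 : ‖gradient f xt - gradient f x‖ ^ 2 ≤ L ^ 2 * ‖x - xt‖ ^ 2 := by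
    nlinarith [norm_nonneg (gradient f xt - gradient f x), norm_nonneg (x - xt)]
  nlinarith [hη.le]
end

section
/- One-step error-feedback contraction bound: Let d ≥ 1 and δ ∈ (0, 1]. Let e, g, c ∈ ℝ^d and suppose ‖(e + g) − c‖² ≤ (1 − δ)‖e + g‖² (c is the compression of p = e + g by a δ-contractive compressor). Then ‖(e + g) − c‖² ≤ (1 − δ/2)‖e‖² + (2(1 − δ)/δ)‖g‖². -/
/-- One-step error-feedback contraction bound: if `‖(e + g) - c‖² ≤ (1 - δ)‖e + g‖²`
(i.e. `c` is a `δ`-contractive compression of `p = e + g`), then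
`‖(e + g) - c‖² ≤ (1 - δ/2)‖e‖² + (2(1 - δ)/δ)‖g‖²`. -/
theorem one_step_error_feedback_bound
    (d : ℕ) (hd : 1 ≤ d) (δ : ℝ) (hδ0 : 0 < δ) (hδ1 : δ ≤ 1)
    (e g c : EuclideanSpace ℝ (Fin d))
    (h : ‖(e + g) - c‖ ^ 2 ≤ (1 - δ) * ‖e + g‖ ^ 2) :
    ‖(e + g) - c‖ ^ 2 ≤ (1 - δ / 2) * ‖e‖ ^ 2 + (2 * (1 - δ) / δ) * ‖g‖ ^ 2 := by
  have hs : ‖e + g‖ ≤ ‖e‖ + ‖g‖ := norm_add_le e g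
  have ha : (0:ℝ) ≤ ‖e‖ := norm_nonneg _
  have hb : (0:ℝ) ≤ ‖g‖ := norm_nonneg _
  have hsn : (0:ℝ) ≤ ‖e + g‖ := norm_nonneg _
  have h1δ : (0:ℝ) ≤ 1 - δ := sub_nonneg.2 hδ1
  have h2 : ‖e + g‖ ^ 2 ≤ (‖e‖ + ‖g‖) ^ 2 := pow_le_pow_left₀ hsn hs 2
  have key : δ * ‖(e + g) - c‖ ^ 2 ≤ (δ - δ^2/2) * ‖e‖^2 + 2*(1-δ) * ‖g‖^2 := by
    nlinarith [mul_le_mul_of_nonneg_left h2 (mul_nonneg hδ0.le h1δ),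
      mul_le_mul_of_nonneg_left h hδ0.le, sq_nonneg (δ*‖e‖ - 2*(1-δ)*‖g‖),
      mul_nonneg (sq_nonneg ‖g‖) (mul_nonneg hδ0.le h1δ)]
  have hfin : ‖(e + g) - c‖ ^ 2 ≤ ((δ - δ^2/2) * ‖e‖^2 + 2*(1-δ) * ‖g‖^2) / δ := by
    rw [le_div_iff₀ hδ0]; linarith [key]
  refine hfin.trans (le_of_eq ?_)
  field_simp
end
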